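/- Let g be a normalized arithmetic function and let 1 ≤ m < n be integers. Then A_{n,m}^{g,id} = Σ_{μ ⊢ n−m} 𝓖(μ) · (∏_{k=0}^{|μ|+ℓ(μ)−1} (n − k)) · Σ_{λ ∈ Orb(μ)} ∏_{k=1}^{ℓ(λ)} (k + Σ_{i=1}^{k} λ_i)^{−1}, where the outer sum runs over all partitions μ of n − m. -/

import Mathlib

open Finset Polynomial

/-- The recursively defined polynomials `P_n^{g,h}` attached to arithmetic functions
`g, h : ℕ → ℝ` (values at `0` are irrelevant): `P_0 = 1` and
`P_n(x) = (x / h(n)) · Σ_{k=1}^n g(k) · P_{n-k}(x)`. -/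
noncomputable def Ppoly (g h : ℕ → ℝ) : ℕ → Polynomial ℝ
  | 0 => 1
  | (n+1) => Polynomial.C (h (n+1))⁻¹ * Polynomial.X *
      ∑ k ∈ Finset.range (n+1), Polynomial.C (g (k+1)) * Ppoly g h (n - k)
  termination_by n => n
  decreasing_by all_goals simp_wf <;> omega

/-- `A_{n,m}^{g,h}`: the coefficient of `x^m` in `(∏_{k=1}^n h(k)) · P_n^{g,h}(x)`. -/
noncomputable def Acoeff (g h : ℕ → ℝ) (n m : ℕ) : ℝ :=
  (∏ k ∈ Finset.Icc 1 n, h k) * (Ppoly g h n).coeff m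

/-- `h` extended by the convention `h(0) := 0`. -/
noncomputable def hExt (h : ℕ → ℝ) (n : ℕ) : ℝ := if n = 0 then 0 else h n

/-- `h_m(n) = ∏_{k=0}^{m-1} h(n-k)` (with the convention `h(0) := 0`). -/
noncomputable def hIter (h : ℕ → ℝ) (m n : ℕ) : ℝ :=
  ∏ k ∈ Finset.range m, hExt h (n - k)

/-- Helper for `H(μ,n)`: defined on reversed compositions, peeling off the head
(which is the last part `μ_{r+1}` of the original composition). -/
noncomputable def Hrev (h : ℕ → ℝ) : List ℕ → ℕ → ℝ
  | [], _ => 1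
  | (a :: t), n =>
      if n < (a :: t).sum + (a :: t).length then 0
      else ∑ k ∈ Finset.Ico ((a :: t).sum + (a :: t).length - 1) n,
        hIter h a k * Hrev h t (k - a)

/-- `H(μ, n)` for a composition `μ` (a list of positive integers): `H(ε,n) = 1`,
`H(μ,n) = Σ_{k=|μ|+ℓ(μ)-1}^{n-1} h_{μ_{r+1}}(k) · H((μ_1,…,μ_r), k - μ_{r+1})`
if `n ≥ |μ| + ℓ(μ)`, and `0` otherwise. -/
noncomputable def HFun (h : ℕ → ℝ) (μ : List ℕ) (n : ℕ) : ℝ := Hrev h μ.reverse n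

/-- `𝓗(μ, n) = Σ_{λ ∈ Orb(μ)} H(λ, n)`: sum over all distinct rearrangements of `μ`. -/
noncomputable def HCal (h : ℕ → ℝ) (μ : List ℕ) (n : ℕ) : ℝ :=
  ∑ lam ∈ μ.permutations.toFinset, HFun h lam n

/-- `𝓖(μ) = ∏_{k=1}^{ℓ(μ)} g(μ_k + 1)`. -/
noncomputable def GCal (g : ℕ → ℝ) (μ : List ℕ) : ℝ := (μ.map (fun p => g (p + 1))).prod


noncomputable def Qoff (c : ℕ) : List ℕ → ℝ
  | [] => 1
  | a :: t => ((c : ℝ) + 1 + (a : ℝ))⁻¹ * Qoff (c + 1 + a) t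

@[simp] lemma Qoff_nil (c : ℕ) : Qoff c [] = 1 := rfl

lemma Qoff_cons (c a : ℕ) (t : List ℕ) :
    Qoff c (a :: t) = ((c : ℝ) + 1 + (a : ℝ))⁻¹ * Qoff (c + 1 + a) t := rfl

/-- Telescoping: summing `Qoff c` over all single insertions of a zero. -/
lemma insert_zero_sum (v : List ℕ) : ∀ c : ℕ,
    ∑ i ∈ Finset.range (v.length + 1), Qoff c (List.insertIdx v i 0)
      = Qoff c v - ((c : ℝ) / ((c : ℝ) + 1)) * Qoff (c + 1) v := by
  induction v with
  | nil =>
    intro c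
    have hc : (c : ℝ) + 1 ≠ 0 := by positivity
    simp only [List.length_nil, zero_add, Finset.range_one, Finset.sum_singleton,
      List.insertIdx_zero]
    rw [Qoff_cons]
    simp only [Qoff_nil, Nat.cast_zero, add_zero, mul_one]
    field_simp
    ring
  | cons a t ih =>
    intro c
    have hc : (c : ℝ) + 1 ≠ 0 := by positivity
    have hca : (c : ℝ) + 1 + (a : ℝ) ≠ 0 := by positivity
    have hca2 : (c : ℝ) + 1 + (a : ℝ) + 1 ≠ 0 := by positivity
    rw [List.length_cons, Finset.sum_range_succ']
    simp only [List.insertIdx_succ_cons, List.insertIdx_zero, Qoff_cons, Nat.add_zero,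
      Nat.cast_zero, add_zero]
    rw [← Finset.mul_sum, ih (c + 1 + a)]
    have e2 : c + 1 + 1 + a = c + 1 + a + 1 := by omega
    rw [e2]
    generalize Qoff (c + 1 + a) t = q1
    generalize Qoff (c + 1 + a + 1) t = q2
    push_cast
    field_simp
    ring

lemma Qoff_append_singleton (v : List ℕ) : ∀ (c a : ℕ),
    Qoff c (v ++ [a]) = Qoff c v * ((c : ℝ) + (v.length : ℝ) + (v.sum : ℝ) + 1 + (a : ℝ))⁻¹ := by
  induction v with
  | nil => intro c a; simp [Qoff_cons]
  | cons b t ih =>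
    intro c a
    simp only [List.cons_append, Qoff_cons, ih (c + 1 + b) a, mul_assoc]
    congr 3
    simp only [List.length_cons, List.sum_cons]
    push_cast
    ring

/-- `Qoff 0` agrees with the product appearing in the theorem. -/
lemma Qoff_eq_prod (v : List ℕ) : ∀ c : ℕ,
    Qoff c v = ∏ k ∈ Finset.range v.length, ((k : ℝ) + 1 + (c : ℝ) + ((v.take (k+1)).sum : ℝ))⁻¹ := by
  induction v with
  | nil => intro c; simp [Qoff]
  | cons a t ih =>
    intro c
    rw [Qoff_cons, ih, List.length_cons, Finset.prod_range_succ']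
    simp only [List.length_cons, List.take_succ_cons, List.sum_cons, List.take_zero,
      List.sum_nil, Nat.cast_add, Nat.cast_zero]
    rw [mul_comm]
    congr 1
    · apply Finset.prod_congr rfl
      intro k _
      congr 1
      push_cast
      ring
    · congr 1
      push_cast
      ring

lemma Qoff_zero_eq (lam : List ℕ) :
    Qoff 0 lam = ∏ k ∈ Finset.Icc 1 lam.length, ((k : ℝ) + ((lam.take k).sum : ℝ))⁻¹ := by
  rw [Qoff_eq_prod]
  rw [show Finset.Icc 1 lam.length = Finset.map ⟨fun k => k + 1, add_left_injective 1⟩ (Finset.range lam.length) by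
    ext x; simp [Finset.mem_map]; constructor
    · rintro ⟨h1, h2⟩; exact ⟨x - 1, by omega, by omega⟩
    · rintro ⟨y, hy, rfl⟩; omega]
  rw [Finset.prod_map]
  apply Finset.prod_congr rfl
  intro k _
  simp only [Function.Embedding.coeFn_mk]
  congr 1
  push_cast
  ring


/-- Weak compositions: lists of length `m` of naturals with sum `t`. -/
def Wcomp : ℕ → ℕ → Finset (List ℕ)
  | 0, t => if t = 0 then {[]} else ∅
  | (m+1), t => (Finset.range (t+1)).biUnion (fun a => (Wcomp m (t - a)).image (a :: ·))

lemma mem_Wcomp : ∀ (m t : ℕ) (w : List ℕ), w ∈ Wcomp m t ↔ w.length = m ∧ w.sum = t := by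
  intro m
  induction m with
  | zero =>
    intro t w
    simp only [Wcomp]
    split <;> rename_i h
    · subst h
      simp only [Finset.mem_singleton]
      constructor
      · rintro rfl; simp
      · rintro ⟨h1, h2⟩; exact List.length_eq_zero_iff.mp h1
    · simp only [Finset.notMem_empty, false_iff]
      rintro ⟨h1, h2⟩
      rw [List.length_eq_zero_iff.mp h1] at h2
      simp at h2
      omega
  | succ m ih =>
    intro t w
    simp only [Wcomp, Finset.mem_biUnion, Finset.mem_range, Finset.mem_image]
    constructor
    · rintro ⟨a, ha, w', hw', rfl⟩
      rw [ih] at hw'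
      refine ⟨by simp [hw'.1], ?_⟩
      simp [hw'.2]
      omega
    · rintro ⟨h1, h2⟩
      match w with
      | a :: w' =>
        refine ⟨a, ?_, w', ?_, rfl⟩
        · simp only [List.sum_cons] at h2; omega
        · rw [ih]
          simp only [List.length_cons] at h1
          simp only [List.sum_cons] at h2
          exact ⟨by omega, by omega⟩

lemma sum_Wcomp_succ {M : Type*} [AddCommMonoid M] (m t : ℕ) (f : List ℕ → M) :
    ∑ w ∈ Wcomp (m+1) t, f w =
      ∑ a ∈ Finset.range (t+1), ∑ w' ∈ Wcomp m (t - a), f (a :: w') := by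
  rw [show Wcomp (m+1) t = (Finset.range (t+1)).biUnion
      (fun a => (Wcomp m (t - a)).image (a :: ·)) from rfl]
  rw [Finset.sum_biUnion]
  · apply Finset.sum_congr rfl
    intro a _
    rw [Finset.sum_image]
    intro x _ y _ h
    simpa using h
  · intro a _ b _ hab
    simp only [Function.onFun, Finset.disjoint_left]
    intro w hw hw'
    simp only [Finset.mem_image] at hw hw'
    obtain ⟨x, _, rfl⟩ := hw
    obtain ⟨y, _, h⟩ := hw'
    apply hab
    have := congrArg (fun l => List.headI l) h
    simpa using this.symm


lemma filter_ne_sum (w : List ℕ) : (w.filter (fun a => a ≠ 0)).sum = w.sum := by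
  induction w with
  | nil => simp
  | cons a t ih =>
    simp only [ne_eq, decide_not] at ih ⊢
    rw [List.filter_cons]
    by_cases h : a = 0
    · subst h; simp [ih]
    · simp [h, ih]

lemma count_add_filter_length (v : List ℕ) :
    v.count 0 + (v.filter (fun a => a ≠ 0)).length = v.length := by
  induction v with
  | nil => simp
  | cons a t ih =>
    simp only [ne_eq, decide_not] at ih ⊢
    rw [List.filter_cons, List.count_cons]
    by_cases h : a = 0 <;> simp [h] <;> omega

lemma filter_insertIdx_zero (v : List ℕ) : ∀ i : ℕ,
    ((List.insertIdx v i 0).filter (fun a => a ≠ 0)) = v.filter (fun a => a ≠ 0) := by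
  induction v with
  | nil =>
    intro i
    match i with
    | 0 => simp
    | (i+1) => simp [List.insertIdx]
  | cons a t ih =>
    intro i
    match i with
    | 0 => simp
    | (i+1) =>
      rw [List.insertIdx_succ_cons]
      simp only [List.filter_cons, ih i]

lemma filter_eraseIdx_zero (v : List ℕ) : ∀ i : ℕ, v.getD i 1 = 0 →
    ((v.eraseIdx i).filter (fun a => a ≠ 0)) = v.filter (fun a => a ≠ 0) := by
  induction v with
  | nil => intro i h; simp at h
  | cons a t ih =>
    intro i h
    match i with
    | 0 =>
      simp only [List.getD_cons_zero] at h
      subst h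
      simp [List.eraseIdx]
    | (i+1) =>
      simp only [List.getD_cons_succ] at h
      simp only [List.eraseIdx_cons_succ, List.filter_cons, ih i h]

lemma insertIdx_eraseIdx_self (v : List ℕ) : ∀ i : ℕ, i < v.length → v.getD i 1 = 0 →
    List.insertIdx (v.eraseIdx i) i 0 = v := by
  induction v with
  | nil => intro i h; simp at h
  | cons a t ih =>
    intro i hi h
    match i with
    | 0 =>
      simp only [List.getD_cons_zero] at h
      subst h
      simp [List.eraseIdx]
    | (i+1) =>
      simp only [List.getD_cons_succ] at h
      simp only [List.length_cons] at hi
      rw [List.eraseIdx_cons_succ, List.insertIdx_succ_cons, ih i (by omega) h]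

lemma card_zero_positions (v : List ℕ) :
    ((Finset.range v.length).filter (fun i => v.getD i 1 = 0)).card = v.count 0 := by
  induction v with
  | nil => simp
  | cons a t ih =>
    rw [Finset.card_filter, List.length_cons, Finset.sum_range_succ']
    simp only [List.getD_cons_succ, List.getD_cons_zero]
    rw [← Finset.card_filter, ih]
    by_cases h : a = 0
    · subst h; simp [List.count_cons_self]
    · rw [List.count_cons_of_ne (by omega)]
      simp [h]

def Fib (z : ℕ) (ρ : List ℕ) : Finset (List ℕ) :=
  (Wcomp (z + ρ.length) ρ.sum).filter (fun v => v.filter (fun a => a ≠ 0) = ρ)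

lemma mem_Fib {z : ℕ} {ρ v : List ℕ} :
    v ∈ Fib z ρ ↔ v.length = z + ρ.length ∧ v.filter (fun a => a ≠ 0) = ρ := by
  simp only [Fib, Finset.mem_filter, mem_Wcomp]
  constructor
  · rintro ⟨⟨h1, _⟩, h3⟩; exact ⟨h1, h3⟩
  · rintro ⟨h1, h2⟩
    refine ⟨⟨h1, ?_⟩, h2⟩
    rw [← h2, filter_ne_sum]

lemma sum_Fib (ρ : List ℕ) (hρ : ∀ a ∈ ρ, a ≠ 0) : ∀ z : ℕ,
    ∑ v ∈ Fib z ρ, Qoff 0 v = Qoff 0 ρ / (z.factorial : ℝ) := by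
  intro z
  induction z with
  | zero =>
    have hFib : Fib 0 ρ = {ρ} := by
      ext v
      simp only [mem_Fib, Finset.mem_singleton, zero_add]
      constructor
      · rintro ⟨h1, h2⟩
        have hsub := List.filter_sublist (p := fun a => decide (a ≠ 0)) (l := v)
        have hv : v.filter (fun a => a ≠ 0) = v :=
          List.Sublist.eq_of_length hsub (by rw [h2, h1])
        rw [← hv, h2]
      · rintro rfl
        refine ⟨rfl, List.filter_eq_self.mpr ?_⟩
        intro a ha
        simpa using hρ a ha
    rw [hFib]
    simp
  | succ z ih =>
    have main : ∑ u ∈ Fib z ρ, ∑ i ∈ Finset.range (u.length + 1), Qoff 0 (List.insertIdx u i 0)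
        = ∑ v ∈ Fib (z+1) ρ, ((z : ℝ) + 1) * Qoff 0 v := by
      have hrhs : ∀ v ∈ Fib (z+1) ρ,
          ((z : ℝ) + 1) * Qoff 0 v
            = ∑ _i ∈ (Finset.range v.length).filter (fun i => v.getD i 1 = 0), Qoff 0 v := by
        intro v hv
        rw [Finset.sum_const, card_zero_positions]
        obtain ⟨h1, h2⟩ := mem_Fib.mp hv
        have hc := count_add_filter_length v
        rw [h2] at hc
        have : v.count 0 = z + 1 := by omega
        rw [this]
        push_cast
        ring
      rw [Finset.sum_congr rfl hrhs]
      rw [Finset.sum_sigma' (Fib z ρ) _ (fun u i => Qoff 0 (List.insertIdx u i 0)),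
        Finset.sum_sigma' (Fib (z+1) ρ) _ (fun v _i => Qoff 0 v)]
      refine Finset.sum_nbij' (fun p => ⟨List.insertIdx p.1 p.2 0, p.2⟩)
        (fun p => ⟨p.1.eraseIdx p.2, p.2⟩) ?_ ?_ ?_ ?_ ?_
      · rintro ⟨u, i⟩ hp
        simp only [Finset.mem_sigma, mem_Fib, Finset.mem_range, Finset.mem_filter] at hp ⊢
        obtain ⟨⟨h1, h2⟩, hi⟩ := hp
        have hi' : i ≤ u.length := by omega
        have hlen := List.length_insertIdx_of_le_length hi' 0
        refine ⟨⟨by omega, by rw [filter_insertIdx_zero, h2]⟩, by omega, ?_⟩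
        rw [List.getD_eq_getElem _ _ (by omega)]
        exact List.getElem_insertIdx_self (by omega)
      · rintro ⟨v, i⟩ hp
        simp only [Finset.mem_sigma, mem_Fib, Finset.mem_range, Finset.mem_filter] at hp ⊢
        obtain ⟨⟨h1, h2⟩, hi, hz⟩ := hp
        have hlen : (v.eraseIdx i).length = v.length - 1 := by
          rw [List.length_eraseIdx]; simp [hi]
        refine ⟨⟨by omega, by rw [filter_eraseIdx_zero v i hz, h2]⟩, by omega⟩
      · rintro ⟨u, i⟩ hp
        simp only [List.eraseIdx_insertIdx_self]
      · rintro ⟨v, i⟩ hp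
        simp only [Finset.mem_sigma, mem_Fib, Finset.mem_range, Finset.mem_filter] at hp
        obtain ⟨⟨h1, h2⟩, hi, hz⟩ := hp
        simp only
        congr 1
        exact insertIdx_eraseIdx_self v i hi hz
      · rintro ⟨u, i⟩ _
        rfl
    have lhs_eq : ∑ u ∈ Fib z ρ, ∑ i ∈ Finset.range (u.length + 1), Qoff 0 (List.insertIdx u i 0)
        = ∑ u ∈ Fib z ρ, Qoff 0 u := by
      apply Finset.sum_congr rfl
      intro u _
      rw [insert_zero_sum u 0]
      simp
    rw [lhs_eq, ih] at main
    rw [← Finset.mul_sum] at main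
    have hz1 : ((z : ℝ) + 1) ≠ 0 := by positivity
    have hzf : ((z.factorial : ℝ)) ≠ 0 := by positivity
    rw [Nat.factorial_succ]
    push_cast
    field_simp at main ⊢
    linarith [main]

lemma Ppoly_zero (g h : ℕ → ℝ) : Ppoly g h 0 = 1 := by rw [Ppoly.eq_1]

lemma Ppoly_succ (g h : ℕ → ℝ) (n : ℕ) : Ppoly g h (n+1) =
    Polynomial.C (h (n+1))⁻¹ * Polynomial.X *
      ∑ k ∈ Finset.range (n+1), Polynomial.C (g (k+1)) * Ppoly g h (n - k) := by
  rw [Ppoly.eq_2]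

lemma coeff_Ppoly_zero (g h : ℕ → ℝ) : ∀ n, ∀ m, n < m → (Ppoly g h n).coeff m = 0 := by
  intro n
  induction n using Nat.strong_induction_on with
  | _ n ihn =>
    intro m hm
    match n, m with
    | 0, m =>
      rw [Ppoly_zero g h, Polynomial.coeff_one]
      simp only [ite_eq_right_iff]
      omega
    | (n+1), (m+1) =>
      rw [Ppoly_succ, mul_assoc, Polynomial.coeff_C_mul, Polynomial.coeff_X_mul,
        Polynomial.finset_sum_coeff]
      have hz : ∀ k ∈ Finset.range (n+1),
          (Polynomial.C (g (k+1)) * Ppoly g h (n-k)).coeff m = 0 := by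
        intro k hk
        rw [Polynomial.coeff_C_mul, ihn (n-k) (by omega) m (by omega), mul_zero]
      rw [Finset.sum_congr rfl hz]
      simp

lemma coeff_Ppoly (g : ℕ → ℝ) : ∀ n, ∀ m, m ≤ n → (Ppoly g (fun k => (k : ℝ)) n).coeff m =
    ∑ w ∈ Wcomp m (n - m), (w.map (fun p => g (p+1))).prod * Qoff 0 w.reverse := by
  intro n
  induction n using Nat.strong_induction_on with
  | _ n ihn =>
    intro m hm
    match n, m with
    | 0, m =>
      have hm0 : m = 0 := by omega
      subst hm0
      rw [Ppoly_zero, Polynomial.coeff_one]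
      simp [Wcomp]
    | (n+1), 0 =>
      rw [Ppoly_succ, mul_assoc, Polynomial.coeff_C_mul, Polynomial.mul_coeff_zero,
        Polynomial.coeff_X_zero, zero_mul, mul_zero]
      rw [show Wcomp 0 (n + 1 - 0) = if n + 1 - 0 = 0 then {([] : List ℕ)} else ∅ from rfl]
      simp
    | (n+1), (m+1) =>
      rw [Ppoly_succ, mul_assoc, Polynomial.coeff_C_mul, Polynomial.coeff_X_mul,
        Polynomial.finset_sum_coeff]
      simp only [Polynomial.coeff_C_mul]
      have hmn : m ≤ n := by omega
      set t := n - m with ht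
      -- truncate the sum
      have htrunc : ∑ k ∈ Finset.range (n+1), g (k+1) * (Ppoly g (fun k => (k : ℝ)) (n-k)).coeff m
          = ∑ k ∈ Finset.range (t+1), g (k+1) * (Ppoly g (fun k => (k : ℝ)) (n-k)).coeff m := by
        apply (Finset.sum_subset (by intro x hx; simp only [Finset.mem_range] at hx ⊢; omega) ?_).symm
        intro k hk1 hk2
        simp only [Finset.mem_range] at hk1 hk2
        rw [coeff_Ppoly_zero g _ (n-k) m (by omega), mul_zero]
      rw [htrunc]
      have hstep : ∀ k ∈ Finset.range (t+1),
          g (k+1) * (Ppoly g (fun k => (k : ℝ)) (n-k)).coeff m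
            = g (k+1) * ∑ w ∈ Wcomp m (t - k), (w.map (fun p => g (p+1))).prod * Qoff 0 w.reverse := by
        intro k hk
        simp only [Finset.mem_range] at hk
        rw [ihn (n-k) (by omega) m (by omega), show n - k - m = t - k by omega]
      rw [Finset.sum_congr rfl hstep]
      have hT : n + 1 - (m + 1) = t := by omega
      rw [hT, sum_Wcomp_succ]
      rw [Finset.mul_sum]
      apply Finset.sum_congr rfl
      intro a ha
      simp only [Finset.mem_range] at ha
      rw [Finset.mul_sum, Finset.mul_sum]
      apply Finset.sum_congr rfl
      intro w hw
      rw [mem_Wcomp] at hw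
      obtain ⟨hlen, hsum⟩ := hw
      rw [List.reverse_cons, Qoff_append_singleton, List.map_cons, List.prod_cons,
        List.length_reverse, List.sum_reverse, hlen, hsum]
      have hcast : ((0 : ℕ) : ℝ) + (m : ℝ) + ((t - a : ℕ) : ℝ) + 1 + (a : ℝ) = ((n : ℝ) + 1) := by
        have h1 : a ≤ t := by omega
        have h2 : m ≤ n := hmn
        push_cast [Nat.cast_sub h1, ht, Nat.cast_sub h2, Nat.cast_sub (show a ≤ n - m by omega)]
        ring
      rw [hcast]
      push_cast
      ring

lemma GCal_filter (g : ℕ → ℝ) (hg : g 1 = 1) (w : List ℕ) :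
    GCal g (w.filter (fun a => a ≠ 0)) = GCal g w := by
  induction w with
  | nil => rfl
  | cons a tl ih =>
    simp only [ne_eq, decide_not, GCal, List.map_cons, List.prod_cons] at ih ⊢
    rw [List.filter_cons]
    by_cases h : a = 0
    · subst h
      simp [hg, ih]
    · simp [h, ih]

lemma GCal_perm (g : ℕ → ℝ) {l1 l2 : List ℕ} (h : l1.Perm l2) : GCal g l1 = GCal g l2 :=
  List.Perm.prod_eq (List.Perm.map _ h)

lemma prod_Icc_cast_factorial (n : ℕ) : (∏ k ∈ Finset.Icc 1 n, ((k : ℕ) : ℝ)) = (n.factorial : ℝ) := by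
  rw [← Nat.cast_prod]
  congr 1
  induction n with
  | zero => simp
  | succ n ih =>
    rw [Finset.prod_Icc_succ_top (by omega), ih, Nat.factorial_succ, mul_comm]

lemma cast_factorial_eq (n : ℕ) : ∀ j, j ≤ n →
    (n.factorial : ℝ) = (∏ k ∈ Finset.range j, ((n : ℝ) - (k : ℝ))) * ((n - j).factorial : ℝ) := by
  intro j
  induction j with
  | zero => simp
  | succ j ih =>
    intro hj
    rw [Finset.prod_range_succ, ih (by omega),
      show n - j = (n - (j+1)) + 1 from by omega, Nat.factorial_succ]
    have hcast : ((n - (j+1) + 1 : ℕ) : ℝ) = (n : ℝ) - (j : ℝ) := by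
      push_cast [Nat.cast_sub (show j + 1 ≤ n from hj)]
      ring
    rw [Nat.cast_mul, hcast]
    ring

/-- Total map from weak compositions to partitions. -/
noncomputable def pOf (t : ℕ) (w : List ℕ) : Nat.Partition t :=
  if h : ((w.filter (fun a => a ≠ 0) : List ℕ) : Multiset ℕ).sum = t then
    { parts := ((w.filter (fun a => a ≠ 0) : List ℕ) : Multiset ℕ),
      parts_pos := by
        intro i hi
        simp only [Multiset.mem_coe, List.mem_filter] at hi
        have := hi.2
        simp only [ne_eq, decide_not, Bool.not_eq_true', decide_eq_false_iff_not] at this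
        omega,
      parts_sum := h }
  else
    { parts := Multiset.replicate t 1,
      parts_pos := by
        intro i hi
        rw [Multiset.eq_of_mem_replicate hi]; omega,
      parts_sum := by simp [Multiset.sum_replicate] }

lemma pOf_eq {t : ℕ} (w : List ℕ) (μ : Nat.Partition t)
    (hw : ((w.filter (fun a => a ≠ 0) : List ℕ) : Multiset ℕ) = μ.parts) : pOf t w = μ := by
  have hsum : ((w.filter (fun a => a ≠ 0) : List ℕ) : Multiset ℕ).sum = t := by
    rw [hw]; exact μ.parts_sum
  rw [pOf, dif_pos hsum]
  exact Nat.Partition.ext hw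

lemma pOf_parts {t : ℕ} (w : List ℕ) (μ : Nat.Partition t) (hsum : w.sum = t)
    (h : pOf t w = μ) : ((w.filter (fun a => a ≠ 0) : List ℕ) : Multiset ℕ) = μ.parts := by
  have hs : ((w.filter (fun a => a ≠ 0) : List ℕ) : Multiset ℕ).sum = t := by
    rw [Multiset.sum_coe, filter_ne_sum, hsum]
  rw [← h, pOf, dif_pos hs]

lemma GCal_def (g : ℕ → ℝ) (w : List ℕ) :
    (w.map (fun p => g (p + 1))).prod = GCal g w := rfl

lemma sum_Wcomp_rev (m t : ℕ) (g : ℕ → ℝ) :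
    ∑ w ∈ Wcomp m t, GCal g w * Qoff 0 w.reverse
      = ∑ w ∈ Wcomp m t, GCal g w * Qoff 0 w := by
  refine Finset.sum_nbij' List.reverse List.reverse ?_ ?_ ?_ ?_ ?_
  · intro w hw; rw [mem_Wcomp] at hw ⊢; simp [hw.1, hw.2, List.sum_reverse]
  · intro w hw; rw [mem_Wcomp] at hw ⊢; simp [hw.1, hw.2, List.sum_reverse]
  · intro w _; exact List.reverse_reverse w
  · intro w _; exact List.reverse_reverse w
  · intro w _
    rw [(GCal_perm g (List.reverse_perm w) : GCal g w.reverse = GCal g w)]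

/-- Theorem 2: for `h = id`,
`A_{n,m}^{g,id} = Σ_{μ ⊢ n-m} 𝓖(μ) · ∏_{k=0}^{|μ|+ℓ(μ)-1}(n-k) ·
  Σ_{λ ∈ Orb(μ)} ∏_{k=1}^{ℓ(λ)} (k + Σ_{i=1}^k λ_i)⁻¹`. -/
theorem coefficients_h_id (g : ℕ → ℝ) (hg : g 1 = 1)
    (n m : ℕ) (hm1 : 1 ≤ m) (hmn : m < n) :
    Acoeff g (fun k => (k : ℝ)) n m =
      ∑ μ : Nat.Partition (n - m),
        GCal g μ.parts.toList *
          (∏ k ∈ Finset.range (μ.parts.sum + Multiset.card μ.parts), ((n : ℝ) - (k : ℝ))) *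
          ∑ lam ∈ μ.parts.toList.permutations.toFinset,
            ∏ k ∈ Finset.Icc 1 lam.length, ((k : ℝ) + ((lam.take k).sum : ℝ))⁻¹ := by
  classical
  rw [Acoeff, coeff_Ppoly g n m hmn.le]
  have hIcc : (∏ k ∈ Finset.Icc 1 n, ((fun k => (k : ℝ)) k)) = (n.factorial : ℝ) :=
    prod_Icc_cast_factorial n
  rw [hIcc]
  simp only [GCal_def g]
  rw [sum_Wcomp_rev]
  rw [← Finset.sum_fiberwise (Wcomp m (n - m)) (pOf (n - m)) (fun w => GCal g w * Qoff 0 w),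
    Finset.mul_sum]
  apply Finset.sum_congr rfl
  intro μ _
  have hsum_parts : μ.parts.sum = n - m := μ.parts_sum
  have hOrb : ∀ lam ∈ μ.parts.toList.permutations.toFinset,
      ((lam : List ℕ) : Multiset ℕ) = μ.parts := by
    intro lam hlam
    rw [List.mem_toFinset, List.mem_permutations] at hlam
    rw [← Multiset.coe_toList μ.parts, Multiset.coe_eq_coe]
    exact hlam
  have hlam_props : ∀ lam ∈ μ.parts.toList.permutations.toFinset,
      lam.length = Multiset.card μ.parts ∧ lam.sum = n - m ∧ ∀ a ∈ lam, a ≠ 0 := by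
    intro lam hlam
    have hco := hOrb lam hlam
    refine ⟨?_, ?_, ?_⟩
    · have := congrArg Multiset.card hco
      simpa using this
    · have := congrArg Multiset.sum hco
      rw [Multiset.sum_coe, hsum_parts] at this
      exact this
    · intro a ha
      have hmem : a ∈ μ.parts := by
        rw [← hco]; exact Multiset.mem_coe.mpr ha
      exact (μ.parts_pos hmem).ne'
  have hmaps : ∀ w ∈ (Wcomp m (n - m)).filter (fun w => pOf (n - m) w = μ),
      w.filter (fun a => a ≠ 0) ∈ μ.parts.toList.permutations.toFinset := by
    intro w hw
    rw [Finset.mem_filter, mem_Wcomp] at hw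
    obtain ⟨⟨hlen, hs⟩, hp⟩ := hw
    have hparts := pOf_parts w μ hs hp
    rw [List.mem_toFinset, List.mem_permutations, ← Multiset.coe_eq_coe, hparts,
      Multiset.coe_toList]
  rw [← Finset.sum_fiberwise_of_maps_to hmaps (fun w => GCal g w * Qoff 0 w)]
  have hdf : ∀ lam ∈ μ.parts.toList.permutations.toFinset,
      ((Wcomp m (n - m)).filter (fun w => pOf (n - m) w = μ)).filter
          (fun w => w.filter (fun a => a ≠ 0) = lam)
        = (Wcomp m (n - m)).filter (fun w => w.filter (fun a => a ≠ 0) = lam) := by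
    intro lam hlam
    rw [Finset.filter_filter]
    apply Finset.filter_congr
    intro w hw
    rw [mem_Wcomp] at hw
    constructor
    · rintro ⟨_, h2⟩; exact h2
    · intro h2
      refine ⟨?_, h2⟩
      apply pOf_eq
      rw [h2]
      exact hOrb lam hlam
  rw [Finset.sum_congr rfl (fun lam hlam => by rw [hdf lam hlam])]
  rcases le_or_gt (Multiset.card μ.parts) m with hrm | hrm
  · -- case r ≤ m
    have hfib : ∀ lam ∈ μ.parts.toList.permutations.toFinset,
        (Wcomp m (n - m)).filter (fun w => w.filter (fun a => a ≠ 0) = lam)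
          = Fib (m - Multiset.card μ.parts) lam := by
      intro lam hlam
      obtain ⟨hl, hs, _⟩ := hlam_props lam hlam
      rw [Fib, hl, hs, show m - Multiset.card μ.parts + Multiset.card μ.parts = m from by omega,
        show n - m = n - m from rfl]
    have htoList_perm : ∀ lam ∈ μ.parts.toList.permutations.toFinset,
        lam.Perm μ.parts.toList := by
      intro lam hlam
      rw [List.mem_toFinset, List.mem_permutations] at hlam
      exact hlam
    have hinner : ∀ lam ∈ μ.parts.toList.permutations.toFinset,
        ∑ w ∈ Fib (m - Multiset.card μ.parts) lam, GCal g w * Qoff 0 w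
          = GCal g μ.parts.toList *
              (Qoff 0 lam / (((m - Multiset.card μ.parts).factorial : ℕ) : ℝ)) := by
      intro lam hlam
      obtain ⟨hl, hs, hpos⟩ := hlam_props lam hlam
      have hG : ∀ w ∈ Fib (m - Multiset.card μ.parts) lam, GCal g w = GCal g μ.parts.toList := by
        intro w hw
        rw [mem_Fib] at hw
        rw [← GCal_filter g hg w, hw.2]
        exact GCal_perm g (htoList_perm lam hlam)
      rw [Finset.sum_congr rfl (fun w hw => by rw [hG w hw]), ← Finset.mul_sum,
        sum_Fib lam hpos (m - Multiset.card μ.parts)]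
    rw [Finset.sum_congr rfl (fun lam hlam => by rw [hfib lam hlam, hinner lam hlam])]
    have hP : (∏ k ∈ Finset.range (μ.parts.sum + Multiset.card μ.parts), ((n : ℝ) - (k : ℝ)))
        * (((m - Multiset.card μ.parts).factorial : ℕ) : ℝ) = (n.factorial : ℝ) := by
      rw [hsum_parts]
      have h1 : n - m + Multiset.card μ.parts ≤ n := by omega
      have h2 : n - (n - m + Multiset.card μ.parts) = m - Multiset.card μ.parts := by omega
      rw [cast_factorial_eq n (n - m + Multiset.card μ.parts) h1, h2]
    have hfne : (((m - Multiset.card μ.parts).factorial : ℕ) : ℝ) ≠ 0 := by positivity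
    simp only [← Qoff_zero_eq]
    rw [Finset.mul_sum, Finset.mul_sum]
    apply Finset.sum_congr rfl
    intro lam _
    rw [← hP]
    field_simp
  · -- case r > m : both sides vanish
    have hempty : ∀ lam ∈ μ.parts.toList.permutations.toFinset,
        (Wcomp m (n - m)).filter (fun w => w.filter (fun a => a ≠ 0) = lam) = ∅ := by
      intro lam hlam
      obtain ⟨hl, _, _⟩ := hlam_props lam hlam
      rw [Finset.filter_eq_empty_iff]
      intro w hw
      rw [mem_Wcomp] at hw
      intro hcontra
      have hle := List.length_filter_le (fun a => decide (a ≠ 0)) w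
      rw [hcontra] at hle
      omega
    rw [Finset.sum_congr rfl (fun lam hlam => by rw [hempty lam hlam, Finset.sum_empty])]
    rw [Finset.sum_const_zero, mul_zero]
    have hlt : n < μ.parts.sum + Multiset.card μ.parts := by rw [hsum_parts]; omega
    have h0 : (∏ k ∈ Finset.range (μ.parts.sum + Multiset.card μ.parts), ((n : ℝ) - (k : ℝ))) = 0 :=
      Finset.prod_eq_zero (Finset.mem_range.mpr hlt) (by rw [sub_self])
    rw [h0, mul_zero, zero_mul]
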